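/- If ω ∈ B_n is a signed permutation (prepended with 0) with some number j of odd-position descents and no even-position descents, then the underlying unsigned permutation |ω| ∈ S_n satisfies lpk(|ω|) ≤ j, where lpk counts left peaks. -/

import Mathlib

/-- The value at (1-based) position `k` of the signed permutation determined by the
unsigned permutation `π` and the signs `ε` (with the prepended value `0` at position `0`). -/
def bval {n : ℕ} (π : Equiv.Perm (Fin n)) (ε : Fin n → Bool) (k : ℕ) : ℤ :=
  if h : 1 ≤ k ∧ k ≤ n then
    (if ε ⟨k - 1, by omega⟩ then -(((π ⟨k - 1, by omega⟩ : Fin n) : ℤ) + 1)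
     else ((π ⟨k - 1, by omega⟩ : Fin n) : ℤ) + 1)
  else 0

/-- number of descents at even positions `i ∈ {0,…,n-1}` of a signed permutation -/
def bdes0 {n : ℕ} (π : Equiv.Perm (Fin n)) (ε : Fin n → Bool) : ℕ :=
  ((Finset.range n).filter (fun i => i % 2 = 0 ∧ bval π ε (i + 1) < bval π ε i)).card

/-- number of descents at odd positions `i ∈ {0,…,n-1}` of a signed permutation -/
def bdes1 {n : ℕ} (π : Equiv.Perm (Fin n)) (ε : Fin n → Bool) : ℕ :=
  ((Finset.range n).filter (fun i => i % 2 = 1 ∧ bval π ε (i + 1) < bval π ε i)).card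

/-- number of ascents at even positions `i ∈ {0,…,n-1}` of a signed permutation -/
def basc0 {n : ℕ} (π : Equiv.Perm (Fin n)) (ε : Fin n → Bool) : ℕ :=
  ((Finset.range n).filter (fun i => i % 2 = 0 ∧ bval π ε i < bval π ε (i + 1))).card

/-- number of ascents at odd positions `i ∈ {0,…,n-1}` of a signed permutation -/
def basc1 {n : ℕ} (π : Equiv.Perm (Fin n)) (ε : Fin n → Bool) : ℕ :=
  ((Finset.range n).filter (fun i => i % 2 = 1 ∧ bval π ε i < bval π ε (i + 1))).card

/-- the value at (1-based) position `k` of the unsigned permutation `u` of `[n]`,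
with the convention `u 0 = 0`. -/
def uval {n : ℕ} (u : Equiv.Perm (Fin n)) (k : ℕ) : ℕ :=
  if h : 1 ≤ k ∧ k ≤ n then ((u ⟨k - 1, by omega⟩ : Fin n) : ℕ) + 1 else 0

/-- the number of left peaks of `u`: indices `1 ≤ i < n` with `u(i-1) < u(i) > u(i+1)`,
with the convention `u 0 = 0`. -/
def lpk {n : ℕ} (u : Equiv.Perm (Fin n)) : ℕ :=
  ((Finset.Ico 1 n).filter
    (fun i => uval u (i - 1) < uval u i ∧ uval u (i + 1) < uval u i)).card


lemma bval_abs {n : ℕ} (π : Equiv.Perm (Fin n)) (ε : Fin n → Bool) (k : ℕ) (hk : k ≤ n) :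
    bval π ε k = (uval π k : ℤ) ∨ bval π ε k = -(uval π k : ℤ) := by
  unfold bval uval
  by_cases h : 1 ≤ k ∧ k ≤ n
  · rw [dif_pos h, dif_pos h]
    split
    · right; push_cast; ring
    · left; push_cast; ring
  · rw [dif_neg h, dif_neg h]; left; simp

lemma uval_pos {n : ℕ} (π : Equiv.Perm (Fin n)) (k : ℕ) (hk : 1 ≤ k ∧ k ≤ n) :
    1 ≤ uval π k := by
  unfold uval; rw [dif_pos hk]; omega

theorem stmt16 (n j : ℕ) (π : Equiv.Perm (Fin n)) (ε : Fin n → Bool)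
    (h1 : bdes1 π ε = j) (h0 : bdes0 π ε = 0) :
    lpk π ≤ j := by
  subst h1
  rw [lpk, bdes1]
  apply Finset.card_le_card_of_injOn (fun i => if 0 < bval π ε i then i else i - 1)
  · intro i hi
    simp only [Finset.mem_coe, Finset.mem_filter, Finset.mem_Ico] at hi
    obtain ⟨⟨hi1, hin⟩, hp1, hp2⟩ := hi
    have hupos : 1 ≤ uval π i := uval_pos π i ⟨hi1, by omega⟩
    have habs := bval_abs π ε i (by omega)
    have hnoteven : ∀ p, p < n → p % 2 = 0 → ¬ bval π ε (p+1) < bval π ε p := by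
      intro p hp hpe hd
      have hmem : p ∈ (Finset.range n).filter
          (fun i => i % 2 = 0 ∧ bval π ε (i + 1) < bval π ε i) :=
        Finset.mem_filter.mpr ⟨Finset.mem_range.mpr hp, hpe, hd⟩
      rw [bdes0, Finset.card_eq_zero] at h0
      rw [h0] at hmem
      exact absurd hmem (Finset.notMem_empty p)
    simp only [Finset.mem_coe, Finset.mem_filter, Finset.mem_range]
    by_cases hpos : 0 < bval π ε i
    · rw [if_pos hpos]
      have habs2 := bval_abs π ε (i+1) (by omega)
      have hdes : bval π ε (i+1) < bval π ε i := by omega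
      refine ⟨by omega, ?_, hdes⟩
      rcases Nat.even_or_odd i with he | ho
      · exact absurd hdes (hnoteven i hin (Nat.even_iff.mp he))
      · exact Nat.odd_iff.mp ho
    · rw [if_neg hpos]
      have habs2 := bval_abs π ε (i-1) (by omega)
      have hi' : i - 1 + 1 = i := by omega
      have hdes : bval π ε (i - 1 + 1) < bval π ε (i - 1) := by rw [hi']; omega
      refine ⟨by omega, ?_, hdes⟩
      rcases Nat.even_or_odd (i-1) with he | ho
      · exact absurd hdes (hnoteven (i-1) (by omega) (Nat.even_iff.mp he))
      · exact Nat.odd_iff.mp ho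
  · intro a ha b hb hab
    simp only [Finset.mem_coe, Finset.mem_filter, Finset.mem_Ico] at ha hb
    obtain ⟨⟨ha1, han⟩, hpa1, hpa2⟩ := ha
    obtain ⟨⟨hb1, hbn⟩, hpb1, hpb2⟩ := hb
    simp only at hab
    rcases Nat.lt_trichotomy a b with h | h | h
    · exfalso
      have hba : b = a + 1 := by split_ifs at hab <;> omega
      rw [hba] at hpb1
      simp only [Nat.add_sub_cancel] at hpb1
      omega
    · exact h
    · exfalso
      have hba : a = b + 1 := by split_ifs at hab <;> omega
      rw [hba] at hpa1
      simp only [Nat.add_sub_cancel] at hpa1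
      omega
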